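/- Define σ_n^{(j)} = (1/(3·(n choose 2)·2^{2n−7})) · [(2j−1)!!/(j−1)!] · [(2j+1)!!/j!] · [(2n−2j−3)!!/(n−j−2)!] · [(2n−2j−1)!!/(n−j−1)!]. There exists a constant C > 0 such that for all n ≥ 3 and all j ∈ {1,…,n−2}, | σ_n^{(j)} − (256/(3π²)) · j(n−j)/n² | ≤ C/n. -/

import Mathlib

open scoped Classical

open Nat

noncomputable def Wc (k : ℕ) : ℝ := (Nat.centralBinom k : ℝ) / 4 ^ k

lemma Wc_pos (k : ℕ) : 0 < Wc k :=
  div_pos (by exact_mod_cast k.centralBinom_pos) (by positivity)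

lemma cb_nat (k : ℕ) : Nat.centralBinom k * (k ! * k !) = (2 * k)! := by
  have h := Nat.choose_mul_factorial_mul_factorial (by omega : k ≤ 2 * k)
  have h2 : 2 * k - k = k := by omega
  rw [h2] at h
  simpa [Nat.centralBinom, mul_assoc] using h

lemma cb_cast (k : ℕ) : (Nat.centralBinom k : ℝ) * ((k ! : ℝ) * (k ! : ℝ)) = ((2 * k)! : ℝ) := by
  exact_mod_cast congrArg (Nat.cast (R := ℝ)) (cb_nat k)

-- nat-level double factorial identities
lemma df_nat (k : ℕ) : (2 * k + 1)‼ * 2 ^ k = (2 * k + 1) * Nat.centralBinom k * k ! := by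
  have h1 : (2 * k + 1)! = (2 * k + 1)‼ * (2 ^ k * k !) := by
    rw [Nat.factorial_eq_mul_doubleFactorial, Nat.doubleFactorial_two_mul]
  have h3 : (2 * k + 1)! = (2 * k + 1) * (2 * k)! := Nat.factorial_succ _
  have h2 := cb_nat k
  apply Nat.eq_of_mul_eq_mul_right (Nat.factorial_pos k)
  calc (2 * k + 1)‼ * 2 ^ k * k ! = (2 * k + 1)! := by rw [h1]; ring
    _ = (2 * k + 1) * (Nat.centralBinom k * (k ! * k !)) := by rw [h3, h2]
    _ = (2 * k + 1) * Nat.centralBinom k * k ! * k ! := by ring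

lemma df_nat' (k : ℕ) : (2 * k - 1)‼ * 2 ^ k = Nat.centralBinom k * k ! := by
  have h0 : (2 * k + 1)‼ = (2 * k + 1) * (2 * k - 1)‼ := Nat.doubleFactorial_add_one (2 * k)
  have h1 := df_nat k
  rw [h0] at h1
  have : (2 * k + 1) * ((2 * k - 1)‼ * 2 ^ k) = (2 * k + 1) * (Nat.centralBinom k * k !) := by
    rw [← mul_assoc, h1, mul_assoc]
  exact Nat.eq_of_mul_eq_mul_left (by omega) this

lemma ratio2 (k : ℕ) : ((2 * k + 1)‼ : ℝ) / (k ! : ℝ) = (2 * k + 1) * 2 ^ k * Wc k := by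
  have h := congrArg (Nat.cast (R := ℝ)) (df_nat k)
  push_cast at h
  rw [Wc]
  have hk : (k ! : ℝ) ≠ 0 := by positivity
  have h2 : (0:ℝ) < 2 ^ k := by positivity
  have h4 : ((4:ℝ)) ^ k = 2 ^ k * 2 ^ k := by
    rw [show (4:ℝ) = 2 * 2 by norm_num, mul_pow]
  field_simp
  rw [h4]
  nlinarith [h]

lemma ratio1 (k : ℕ) (hk : 1 ≤ k) :
    ((2 * k - 1)‼ : ℝ) / ((k - 1)! : ℝ) = k * 2 ^ k * Wc k := by
  have h := congrArg (Nat.cast (R := ℝ)) (df_nat' k)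
  push_cast at h
  have hfac : (k ! : ℝ) = k * ((k - 1)! : ℝ) := by
    have := Nat.mul_factorial_pred (by omega : k ≠ 0)
    exact_mod_cast (congrArg (Nat.cast (R := ℝ)) this).symm
  rw [Wc]
  have hk1 : (((k - 1)!) : ℝ) ≠ 0 := by positivity
  have h4 : ((4:ℝ)) ^ k = 2 ^ k * 2 ^ k := by
    rw [show (4:ℝ) = 2 * 2 by norm_num, mul_pow]
  field_simp
  rw [h4]
  linear_combination (2:ℝ) ^ k * h + 2 ^ k * (Nat.centralBinom k : ℝ) * hfac

open Real in
lemma hW_one (k : ℕ) : (2 * (k:ℝ) + 1) * Wc k ^ 2 * Real.Wallis.W k = 1 := by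
  rw [Real.Wallis.W_eq_factorial_ratio, Wc]
  have hcb := cb_cast k
  have h4 : ((2:ℝ)) ^ (4 * k) = (4 ^ k) ^ 2 := by
    rw [show (4:ℝ) = 2 ^ 2 by norm_num, ← pow_mul, ← pow_mul]; ring_nf
  have hne1 : ((2 * k)! : ℝ) ≠ 0 := by positivity
  have hne2 : (2 * (k:ℝ) + 1) ≠ 0 := by positivity
  have hne3 : ((4:ℝ)) ^ k ≠ 0 := by positivity
  have hcb2 : (Nat.centralBinom k : ℝ)^2 * ((k ! : ℝ)^2 * (k ! : ℝ)^2) = ((2*k)! : ℝ)^2 := by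
    linear_combination ((Nat.centralBinom k : ℝ) * ((k ! : ℝ) * (k ! : ℝ)) + ((2*k)! : ℝ)) * hcb
  rw [h4]
  field_simp
  linear_combination hcb2

open Real in
lemma u_lower (k : ℕ) : 2 * (k:ℝ) ≤ π * ((k:ℝ) * (2 * k + 1) * Wc k ^ 2) := by
  have h1 := Real.Wallis.W_le k
  have h2 := Real.Wallis.W_pos k
  have h3 := hW_one k
  have hw : 0 < Wc k := Wc_pos k
  have hk : (0:ℝ) ≤ (k:ℝ) := Nat.cast_nonneg k
  have hA : (0:ℝ) ≤ (2*(k:ℝ)+1) * Wc k ^ 2 := by positivity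
  have hB : (0:ℝ) ≤ π - 2 * Real.Wallis.W k := by linarith
  have hint := mul_nonneg (mul_nonneg hk hA) hB
  have h3k : (k:ℝ) * ((2*(k:ℝ)+1) * Wc k ^ 2 * Real.Wallis.W k) = k := by rw [h3, mul_one]
  nlinarith [hint, h3k]

open Real in
lemma u_upper (k : ℕ) : π * ((k:ℝ) * (2 * k + 1) * Wc k ^ 2) ≤ 2 * (k:ℝ) + 1 := by
  have h1 := Real.Wallis.le_W k
  have h2 := Real.Wallis.W_pos k
  have h3 := hW_one k
  have hw : 0 < Wc k := Wc_pos k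
  have hk : (0:ℝ) ≤ (k:ℝ) := Nat.cast_nonneg k
  have hd : (0:ℝ) < 2 * k + 2 := by positivity
  have key : π * (2 * (k:ℝ) + 1) ≤ (4 * k + 4) * Real.Wallis.W k := by
    rw [div_mul_eq_mul_div, div_le_iff₀ hd] at h1
    nlinarith [h1]
  -- multiply key by k * Wc k ^2 ≥ 0 and use h3
  have hkw : (0:ℝ) ≤ (k:ℝ) * Wc k ^ 2 := by positivity
  have step := mul_le_mul_of_nonneg_right key hkw
  -- step : π*(2k+1)*(k*Wc²) ≤ (4k+4)*W*(k*Wc²)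
  -- RHS = (4k+4)*k/(2k+1) * ((2k+1)Wc²W) = (4k+4)*k/(2k+1)
  have hd2 : (0:ℝ) < 2 * (k:ℝ) + 1 := by positivity
  rw [← sub_nonneg]
  have expand : (2 * (k:ℝ) + 1) - π * ((k:ℝ) * (2 * k + 1) * Wc k ^ 2)
      = ((2*(k:ℝ)+1)^2 - π * (2*(k:ℝ)+1) * ((k:ℝ) * (2 * k + 1) * Wc k ^ 2)) / (2*(k:ℝ)+1) := by
    field_simp
  rw [expand]
  apply div_nonneg _ hd2.le
  nlinarith [step, h3, hk]

/-- `σ_n^(j)`, the summand in the expected number of consecutive noncommuting pairs. -/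
noncomputable def sigmaTerm (n j : ℕ) : ℝ :=
  1 / (3 * (n.choose 2 : ℝ) * (2 : ℝ) ^ ((2 * n : ℤ) - 7)) *
    (((2 * j - 1).doubleFactorial : ℝ) / ((j - 1).factorial : ℝ)) *
    (((2 * j + 1).doubleFactorial : ℝ) / (j.factorial : ℝ)) *
    (((2 * n - 2 * j - 3).doubleFactorial : ℝ) / ((n - j - 2).factorial : ℝ)) *
    (((2 * n - 2 * j - 1).doubleFactorial : ℝ) / ((n - j - 1).factorial : ℝ))

lemma sigma_eq (j m : ℕ) (hj : 1 ≤ j) (hm : 1 ≤ m) :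
    sigmaTerm (j + m + 1) j =
      64 * ((j:ℝ) * (2 * j + 1) * Wc j ^ 2) * ((m:ℝ) * (2 * m + 1) * Wc m ^ 2) /
        (3 * ((j:ℝ) + m + 1) * ((j:ℝ) + m)) := by
  set n := j + m + 1 with hn
  have e1 : 2 * n - 2 * j - 3 = 2 * m - 1 := by omega
  have e2 : n - j - 2 = m - 1 := by omega
  have e3 : 2 * n - 2 * j - 1 = 2 * m + 1 := by omega
  have e4 : n - j - 1 = m := by omega
  have echoose : (n.choose 2 : ℝ) = n * (n - 1) / 2 := by
    rw [Nat.choose_two_right]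
    have hd : 2 ∣ n * (n - 1) := (Nat.even_mul_pred_self n).two_dvd
    rw [Nat.cast_div hd (by norm_num : ((2:ℝ)) ≠ 0)]
    have hn1 : ((n - 1 : ℕ) : ℝ) = (n:ℝ) - 1 := by
      have : 1 ≤ n := by omega
      push_cast [this]
      ring
    push_cast [hn1]
    ring
  have ezpow : (2:ℝ) ^ ((2 * n : ℤ) - 7) = 2 ^ (2 * n) / 128 := by
    rw [zpow_sub₀ (by norm_num : (2:ℝ) ≠ 0)]
    norm_num
    rw [show ((2 * (n:ℤ))) = ((2 * n : ℕ) : ℤ) by push_cast; ring, zpow_natCast]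
  have epow : (2:ℝ) ^ (2 * n) = 2 ^ j * 2 ^ j * (2 ^ m * 2 ^ m) * 4 := by
    rw [show 2 * n = j + (j + (m + (m + 2))) by omega]
    rw [pow_add, pow_add, pow_add, pow_add]
    ring
  have hnr : ((n:ℝ)) = (j:ℝ) + m + 1 := by push_cast [hn]; ring
  have hnr1 : ((n:ℝ)) - 1 = (j:ℝ) + m := by rw [hnr]; ring
  rw [sigmaTerm, e1, e2, e3, e4, ratio1 j hj, ratio2 j, ratio1 m hm, ratio2 m,
    echoose, ezpow, epow, hnr]
  have h1 : ((j:ℝ) + m + 1) ≠ 0 := by positivity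
  have h2 : ((j:ℝ) + m) ≠ 0 := by
    have : (1:ℝ) ≤ (j:ℝ) := by exact_mod_cast hj
    positivity
  have h3 : (0:ℝ) < 2 ^ j := by positivity
  have h4 : (0:ℝ) < 2 ^ m := by positivity
  field_simp
  rw [add_sub_cancel_right, div_eq_iff h2]
  ring

set_option maxHeartbeats 1000000 in
open Real in
/-- Uniform asymptotics `σ_n^(j) = (256/(3π²))·j(n-j)/n² + O(1/n)`. -/
theorem sigma_asymptotics :
    ∃ C : ℝ, 0 < C ∧ ∀ n : ℕ, 3 ≤ n → ∀ j : ℕ, 1 ≤ j → j ≤ n - 2 →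
      |sigmaTerm n j -
          256 / (3 * Real.pi ^ 2) * ((j : ℝ) * ((n : ℝ) - (j : ℝ))) / (n : ℝ) ^ 2| ≤
        C / (n : ℝ) := by
  refine ⟨30, by norm_num, ?_⟩
  intro n hn j hj hjn
  set m := n - j - 1 with hmdef
  have hmn : n = j + m + 1 := by omega
  have hm1 : 1 ≤ m := by omega
  have hsig := sigma_eq j m hj hm1
  rw [← hmn] at hsig
  have hN : (n : ℝ) = (j:ℝ) + (m:ℝ) + 1 := by rw [hmn]; push_cast; ring
  rw [hsig, hN]
  set x := (j:ℝ) with hx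
  set y := (m:ℝ) with hy
  have hx1 : (1:ℝ) ≤ x := by rw [hx]; exact_mod_cast hj
  have hy1 : (1:ℝ) ≤ y := by rw [hy]; exact_mod_cast hm1
  have hπ : (3:ℝ) < π := Real.pi_gt_three
  have hπ0 : (0:ℝ) < π := by linarith
  have hπ2 : (9:ℝ) < π ^ 2 := by nlinarith
  set uj := x * (2 * x + 1) * Wc j ^ 2 with huj
  set um := y * (2 * y + 1) * Wc m ^ 2 with hum
  have hujl : 2 * x ≤ π * uj := u_lower j
  have huju : π * uj ≤ 2 * x + 1 := u_upper j
  have huml : 2 * y ≤ π * um := u_lower m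
  have humu : π * um ≤ 2 * y + 1 := u_upper m
  have hujn : (0:ℝ) ≤ π * uj := by linarith
  have humn : (0:ℝ) ≤ π * um := by linarith
  have habu : π ^ 2 * (uj * um) ≤ (2 * x + 1) * (2 * y + 1) := by
    calc π ^ 2 * (uj * um) = (π * uj) * (π * um) := by ring
      _ ≤ (2 * x + 1) * (2 * y + 1) :=
        mul_le_mul huju humu humn (by linarith)
  have habl : (2 * x) * (2 * y) ≤ π ^ 2 * (uj * um) := by
    calc (2 * x) * (2 * y) ≤ (π * uj) * (π * um) :=
        mul_le_mul hujl huml (by linarith) hujn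
      _ = π ^ 2 * (uj * um) := by ring
  have hs0 : (0:ℝ) < x + y := by linarith
  have hs1 : (0:ℝ) < x + y + 1 := by linarith
  have hD : (0:ℝ) < 3 * π ^ 2 * (x + y + 1) ^ 2 * (x + y) := by positivity
  have key : 64 * uj * um / (3 * (x + y + 1) * (x + y)) -
        256 / (3 * π ^ 2) * (x * (x + y + 1 - x)) / (x + y + 1) ^ 2
      = (64 * π ^ 2 * (uj * um) * (x + y + 1) - 256 * x * (y + 1) * (x + y)) /
          (3 * π ^ 2 * (x + y + 1) ^ 2 * (x + y)) := by
    field_simp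
    ring
  rw [key, abs_div, abs_of_pos hD]
  have hEbound : |64 * π ^ 2 * (uj * um) * (x + y + 1) - 256 * x * (y + 1) * (x + y)|
      ≤ 90 * π ^ 2 * (x + y + 1) * (x + y) := by
    rw [abs_le]
    constructor
    · have step := mul_le_mul_of_nonneg_right habl hs1.le
      nlinarith [step, hπ2, mul_pos hs0 hs1, sq_nonneg (x - y), mul_le_mul hx1 hy1 (by norm_num) (by linarith : (0:ℝ) ≤ x)]
    · have step := mul_le_mul_of_nonneg_right habu hs1.le
      nlinarith [step, hπ2, mul_pos hs0 hs1, sq_nonneg (x - y), sq_nonneg (x + y), mul_le_mul hx1 hy1 (by norm_num) (by linarith : (0:ℝ) ≤ x)]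
  calc |64 * π ^ 2 * (uj * um) * (x + y + 1) - 256 * x * (y + 1) * (x + y)| /
        (3 * π ^ 2 * (x + y + 1) ^ 2 * (x + y))
      ≤ (90 * π ^ 2 * (x + y + 1) * (x + y)) / (3 * π ^ 2 * (x + y + 1) ^ 2 * (x + y)) :=
        (div_le_div_iff_of_pos_right hD).mpr hEbound
    _ = 30 / (x + y + 1) := by field_simp; ring
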